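/- Let n ≥ 1, and let g_1,…,g_n be real constants. Define Q : ℝ^{n+1} × ℝ^n → ℝ by Q(x,y) = exp( Σ_{i=1}^{n} ( e^{y_i − x_i} + g_i e^{x_{i+1} − y_i} ) ). Then for all x ∈ ℝ^{n+1}, y ∈ ℝ^n one has the pointwise identity −(1/2) Σ_{i=1}^{n+1} ∂²Q/∂x_i²(x,y) + ( Σ_{i=1}^{n} g_i e^{x_{i+1} − x_i} ) Q(x,y) = −(1/2) Σ_{i=1}^{n} ∂²Q/∂y_i²(x,y) + ( Σ_{i=1}^{n−1} g_i e^{y_{i+1} − y_i} ) Q(x,y). In other words, the kernel Q intertwines the quadratic Hamiltonians of the gl_{n+1} and gl_n open Toda chains. -/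

import Mathlib

open Real

/-- Second partial derivative of `f` in the `i`-th coordinate at `x`. -/
noncomputable def pd2 {k : ℕ} (f : (Fin k → ℝ) → ℝ) (i : Fin k) (x : Fin k → ℝ) : ℝ :=
  deriv (deriv (fun t : ℝ => f (Function.update x i t))) (x i)

/-- The Givental recursive kernel intertwining the `gl_{n+1}` and `gl_n`
open Toda chains (here `n = m + 1 ≥ 1`):
`Q(x,y) = exp( Σ_{i=1}^{n} ( e^{y_i − x_i} + g_i e^{x_{i+1} − y_i} ) )`. -/
noncomputable def Qker (m : ℕ) (g : Fin (m + 1) → ℝ)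
    (x : Fin (m + 2) → ℝ) (y : Fin (m + 1) → ℝ) : ℝ :=
  Real.exp (∑ i : Fin (m + 1),
    (Real.exp (y i - x i.castSucc) + g i * Real.exp (x i.succ - y i)))


lemma deriv2_exp (C P R s : ℝ) :
    deriv (deriv (fun t : ℝ => Real.exp (C + (P * Real.exp t + R * Real.exp (-t))))) s
    = Real.exp (C + (P * Real.exp s + R * Real.exp (-s))) *
      ((P * Real.exp s - R * Real.exp (-s))^2 + (P * Real.exp s + R * Real.exp (-s))) := by
  have hinner : ∀ t : ℝ, HasDerivAt (fun t : ℝ => C + (P * Real.exp t + R * Real.exp (-t)))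
      (P * Real.exp t - R * Real.exp (-t)) t := by
    intro t
    have hexp : HasDerivAt (fun t : ℝ => Real.exp t) (Real.exp t) t := Real.hasDerivAt_exp t
    have hneg : HasDerivAt (fun t : ℝ => Real.exp (-t)) (Real.exp (-t) * (-1)) t :=
      (hasDerivAt_neg t).exp
    have := ((hexp.const_mul P).add (hneg.const_mul R)).const_add C
    exact this.congr_deriv (by ring)
  have hf : ∀ t : ℝ, HasDerivAt (fun t : ℝ => Real.exp (C + (P * Real.exp t + R * Real.exp (-t))))
      (Real.exp (C + (P * Real.exp t + R * Real.exp (-t))) * (P * Real.exp t - R * Real.exp (-t))) t :=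
    fun t => (hinner t).exp
  have hd1 : deriv (fun t : ℝ => Real.exp (C + (P * Real.exp t + R * Real.exp (-t))))
      = fun t : ℝ => Real.exp (C + (P * Real.exp t + R * Real.exp (-t))) * (P * Real.exp t - R * Real.exp (-t)) := by
    funext t; exact (hf t).deriv
  rw [hd1]
  have hexp : HasDerivAt (fun t : ℝ => Real.exp t) (Real.exp s) s := Real.hasDerivAt_exp s
  have hneg : HasDerivAt (fun t : ℝ => Real.exp (-t)) (Real.exp (-s) * (-1)) s :=
    (hasDerivAt_neg s).exp
  have hsecond : HasDerivAt (fun t : ℝ => Real.exp (C + (P * Real.exp t + R * Real.exp (-t))) * (P * Real.exp t - R * Real.exp (-t)))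
      (Real.exp (C + (P * Real.exp s + R * Real.exp (-s))) * (P * Real.exp s - R * Real.exp (-s)) * (P * Real.exp s - R * Real.exp (-s))
        + Real.exp (C + (P * Real.exp s + R * Real.exp (-s))) * (P * Real.exp s - R * (Real.exp (-s) * (-1)))) s := by
    exact (hf s).mul ((hexp.const_mul P).sub (hneg.const_mul R))
  rw [hsecond.deriv]
  ring

noncomputable def Af (m : ℕ) (x : Fin (m+2) → ℝ) (y : Fin (m+1) → ℝ) (j : Fin (m+2)) : ℝ :=
  ∑ i : Fin (m+1), if i.castSucc = j then Real.exp (y i - x j) else 0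

noncomputable def Bf (m : ℕ) (g : Fin (m+1) → ℝ) (x : Fin (m+2) → ℝ) (y : Fin (m+1) → ℝ)
    (j : Fin (m+2)) : ℝ :=
  ∑ i : Fin (m+1), if i.succ = j then g i * Real.exp (x j - y i) else 0

lemma pd2_x (m : ℕ) (g : Fin (m+1) → ℝ) (x : Fin (m+2) → ℝ) (y : Fin (m+1) → ℝ)
    (j : Fin (m+2)) :
    pd2 (fun u => Qker m g u y) j x
    = Qker m g x y * ((Bf m g x y j - Af m x y j)^2 + (Bf m g x y j + Af m x y j)) := by
  classical
  set C : ℝ := ∑ i : Fin (m+1),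
      ((if i.castSucc = j then 0 else Real.exp (y i - x i.castSucc))
        + (if i.succ = j then 0 else g i * Real.exp (x i.succ - y i))) with hC
  set P : ℝ := ∑ i : Fin (m+1), (if i.succ = j then g i * Real.exp (-(y i)) else 0) with hP
  set R : ℝ := ∑ i : Fin (m+1), (if i.castSucc = j then Real.exp (y i) else 0) with hR
  have key : ∀ t : ℝ, Qker m g (Function.update x j t) y
      = Real.exp (C + (P * Real.exp t + R * Real.exp (-t))) := by
    intro t
    unfold Qker
    congr 1
    rw [hC, hP, hR, Finset.sum_mul, Finset.sum_mul, ← Finset.sum_add_distrib,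
      ← Finset.sum_add_distrib]
    apply Finset.sum_congr rfl
    intro i _
    by_cases h1 : i.castSucc = j <;> by_cases h2 : i.succ = j
    · exact absurd (h1.trans h2.symm) (Fin.castSucc_lt_succ : i.castSucc < i.succ).ne
    · simp only [Function.update_apply, h1, h2, if_true, if_false, if_neg h2]
      rw [show y i - t = y i + (-t) from by ring, Real.exp_add]
      ring
    · simp only [Function.update_apply, h1, h2, if_true, if_false, if_neg h1]
      rw [show t - y i = (-(y i)) + t from by ring, Real.exp_add]
      ring
    · simp only [Function.update_apply, h1, h2, if_false]
      ring
  have hQ : Real.exp (C + (P * Real.exp (x j) + R * Real.exp (-(x j)))) = Qker m g x y := by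
    rw [← key (x j), Function.update_eq_self]
  have hB : P * Real.exp (x j) = Bf m g x y j := by
    rw [hP, Finset.sum_mul]
    apply Finset.sum_congr rfl
    intro i _
    by_cases h2 : i.succ = j
    · simp only [h2, if_true]
      rw [show x j - y i = (-(y i)) + x j from by ring, Real.exp_add]; ring
    · simp [h2]
  have hA : R * Real.exp (-(x j)) = Af m x y j := by
    rw [hR, Finset.sum_mul]
    apply Finset.sum_congr rfl
    intro i _
    by_cases h1 : i.castSucc = j
    · simp only [h1, if_true]
      rw [show y i - x j = y i + (-(x j)) from by ring, Real.exp_add]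
    · simp [h1]
  have hfun : (fun t : ℝ => Qker m g (Function.update x j t) y)
      = fun t : ℝ => Real.exp (C + (P * Real.exp t + R * Real.exp (-t))) := funext key
  unfold pd2
  rw [hfun, deriv2_exp, hQ, hB, hA]

lemma pd2_y (m : ℕ) (g : Fin (m+1) → ℝ) (x : Fin (m+2) → ℝ) (y : Fin (m+1) → ℝ)
    (i : Fin (m+1)) :
    pd2 (fun v => Qker m g x v) i y
    = Qker m g x y * ((Real.exp (y i - x i.castSucc) - g i * Real.exp (x i.succ - y i))^2
        + (Real.exp (y i - x i.castSucc) + g i * Real.exp (x i.succ - y i))) := by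
  classical
  set C : ℝ := ∑ i' : Fin (m+1),
      (if i' = i then 0 else (Real.exp (y i' - x i'.castSucc) + g i' * Real.exp (x i'.succ - y i'))) with hC
  set P : ℝ := Real.exp (-(x i.castSucc)) with hP
  set R : ℝ := g i * Real.exp (x i.succ) with hR
  have key : ∀ t : ℝ, Qker m g x (Function.update y i t)
      = Real.exp (C + (P * Real.exp t + R * Real.exp (-t))) := by
    intro t
    unfold Qker
    congr 1
    rw [hC, show P * Real.exp t + R * Real.exp (-t)
        = ∑ i' : Fin (m+1), (if i' = i then P * Real.exp t + R * Real.exp (-t) else 0) from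
        by rw [Finset.sum_ite_eq']; simp,
      ← Finset.sum_add_distrib]
    apply Finset.sum_congr rfl
    intro i' _
    by_cases h : i' = i
    · subst h
      simp only [Function.update_self, if_true, hP, hR]
      rw [show t - x i'.castSucc = (-(x i'.castSucc)) + t from by ring, Real.exp_add,
        show x i'.succ - t = x i'.succ + (-t) from by ring, Real.exp_add]
      ring
    · simp [Function.update_of_ne h, h]
  have hQ : Real.exp (C + (P * Real.exp (y i) + R * Real.exp (-(y i)))) = Qker m g x y := by
    rw [← key (y i), Function.update_eq_self]
  have hA : P * Real.exp (y i) = Real.exp (y i - x i.castSucc) := by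
    rw [hP, ← Real.exp_add]; congr 1; ring
  have hB : R * Real.exp (-(y i)) = g i * Real.exp (x i.succ - y i) := by
    rw [hR, mul_assoc, ← Real.exp_add, sub_eq_add_neg]
  have hfun : (fun t : ℝ => Qker m g x (Function.update y i t))
      = fun t : ℝ => Real.exp (C + (P * Real.exp t + R * Real.exp (-t))) := funext key
  unfold pd2
  rw [hfun, deriv2_exp, hQ, hA, hB]

lemma Bf_zero (m : ℕ) (g : Fin (m+1) → ℝ) (x : Fin (m+2) → ℝ) (y : Fin (m+1) → ℝ) :
    Bf m g x y 0 = 0 := by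
  unfold Bf
  apply Finset.sum_eq_zero
  intro i _
  simp [Fin.succ_ne_zero]

lemma Bf_succ (m : ℕ) (g : Fin (m+1) → ℝ) (x : Fin (m+2) → ℝ) (y : Fin (m+1) → ℝ)
    (i0 : Fin (m+1)) :
    Bf m g x y i0.succ = g i0 * Real.exp (x i0.succ - y i0) := by
  unfold Bf
  simp only [Fin.succ_inj]
  rw [Finset.sum_ite_eq']
  simp

lemma Af_castSucc (m : ℕ) (x : Fin (m+2) → ℝ) (y : Fin (m+1) → ℝ) (i0 : Fin (m+1)) :
    Af m x y i0.castSucc = Real.exp (y i0 - x i0.castSucc) := by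
  unfold Af
  simp only [Fin.castSucc_inj]
  rw [Finset.sum_ite_eq']
  simp

lemma Af_last (m : ℕ) (x : Fin (m+2) → ℝ) (y : Fin (m+1) → ℝ) :
    Af m x y (Fin.last (m+1)) = 0 := by
  unfold Af
  apply Finset.sum_eq_zero
  intro i _
  simp [(Fin.castSucc_lt_last i).ne]

lemma sum_identity (m : ℕ) (a b : Fin (m+1) → ℝ) :
    (((0:ℝ) - a 0)^2 + ((0:ℝ) + a 0))
      + ((∑ i : Fin m, ((b i.castSucc - a i.succ)^2 + (b i.castSucc + a i.succ)))
        + ((b (Fin.last m) - 0)^2 + (b (Fin.last m) + 0)))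
      - 2 * ∑ i : Fin (m+1), a i * b i
    = (∑ i : Fin (m+1), ((a i - b i)^2 + (a i + b i)))
      - 2 * ∑ i : Fin m, b i.castSucc * a i.succ := by
  have h1 : (∑ i : Fin m, ((b i.castSucc - a i.succ)^2 + (b i.castSucc + a i.succ)))
      = ((∑ i : Fin m, (b i.castSucc^2 + b i.castSucc))
        + (∑ i : Fin m, (a i.succ^2 + a i.succ)))
        - 2 * (∑ i : Fin m, b i.castSucc * a i.succ) := by
    rw [← Finset.sum_add_distrib, Finset.mul_sum, ← Finset.sum_sub_distrib]
    exact Finset.sum_congr rfl fun i _ => by ring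
  have h2 : (∑ i : Fin (m+1), ((a i - b i)^2 + (a i + b i)))
      = ((∑ i : Fin (m+1), (a i^2 + a i)) + (∑ i : Fin (m+1), (b i^2 + b i)))
        - 2 * (∑ i : Fin (m+1), a i * b i) := by
    rw [← Finset.sum_add_distrib, Finset.mul_sum, ← Finset.sum_sub_distrib]
    exact Finset.sum_congr rfl fun i _ => by ring
  have h3 : (∑ i : Fin m, (b i.castSucc^2 + b i.castSucc)) + (b (Fin.last m)^2 + b (Fin.last m))
      = ∑ i : Fin (m+1), (b i^2 + b i) := (Fin.sum_univ_castSucc (fun i => b i^2 + b i)).symm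
  have h4 : (a 0^2 + a 0) + (∑ i : Fin m, (a i.succ^2 + a i.succ))
      = ∑ i : Fin (m+1), (a i^2 + a i) := (Fin.sum_univ_succ (fun i => a i^2 + a i)).symm
  rw [h1, h2]
  nlinarith [h3, h4]

lemma sum_Bf_Af (m : ℕ) (g : Fin (m+1) → ℝ) (x : Fin (m+2) → ℝ) (y : Fin (m+1) → ℝ) :
    (∑ j : Fin (m+2), ((Bf m g x y j - Af m x y j)^2 + (Bf m g x y j + Af m x y j)))
    = (((0:ℝ) - Real.exp (y 0 - x (0:Fin (m+1)).castSucc))^2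
        + ((0:ℝ) + Real.exp (y 0 - x (0:Fin (m+1)).castSucc)))
      + ((∑ i : Fin m, ((g i.castSucc * Real.exp (x i.castSucc.succ - y i.castSucc)
            - Real.exp (y i.succ - x i.succ.castSucc))^2
          + (g i.castSucc * Real.exp (x i.castSucc.succ - y i.castSucc)
            + Real.exp (y i.succ - x i.succ.castSucc))))
        + ((g (Fin.last m) * Real.exp (x (Fin.last m).succ - y (Fin.last m)) - 0)^2
          + (g (Fin.last m) * Real.exp (x (Fin.last m).succ - y (Fin.last m)) + 0))) := by
  rw [Fin.sum_univ_succ]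
  congr 1
  · rw [Bf_zero, show (0 : Fin (m+2)) = (0 : Fin (m+1)).castSucc from Fin.castSucc_zero.symm,
      Af_castSucc]
  · rw [Fin.sum_univ_castSucc]
    congr 1
    · apply Finset.sum_congr rfl
      intro i _
      rw [Bf_succ, show Af m x y (Fin.castSucc i).succ = Real.exp (y i.succ - x i.succ.castSucc)
        from by rw [Fin.succ_castSucc, Af_castSucc]]
    · rw [Bf_succ, show Af m x y (Fin.last m).succ = 0 from by
        rw [Fin.succ_last]; exact Af_last m x y]

lemma final_algebra (m : ℕ) (Q : ℝ) (a b : Fin (m+1) → ℝ) :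
    -(1/2) * (Q * ((((0:ℝ) - a 0)^2 + ((0:ℝ) + a 0))
      + ((∑ i : Fin m, ((b i.castSucc - a i.succ)^2 + (b i.castSucc + a i.succ)))
        + ((b (Fin.last m) - 0)^2 + (b (Fin.last m) + 0)))))
      + (∑ i : Fin (m+1), a i * b i) * Q
    = -(1/2) * (Q * (∑ i : Fin (m+1), ((a i - b i)^2 + (a i + b i))))
      + (∑ i : Fin m, b i.castSucc * a i.succ) * Q := by
  have h := sum_identity m a b
  linear_combination (-(1/2) * Q) * h

/-- The kernel `Q` intertwines the quadratic Hamiltonians of the `gl_{n+1}`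
and `gl_n` open Toda chains, `n = m + 1 ≥ 1`. -/
theorem gl_open_toda_intertwining (m : ℕ) (g : Fin (m + 1) → ℝ)
    (x : Fin (m + 2) → ℝ) (y : Fin (m + 1) → ℝ) :
    -(1/2) * (∑ i : Fin (m + 2), pd2 (fun u => Qker m g u y) i x)
      + (∑ i : Fin (m + 1), g i * Real.exp (x i.succ - x i.castSucc)) * Qker m g x y
    = -(1/2) * (∑ i : Fin (m + 1), pd2 (fun v => Qker m g x v) i y)
      + (∑ i : Fin m, g i.castSucc * Real.exp (y i.succ - y i.castSucc)) * Qker m g x y := by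
  have hgx : (∑ i : Fin (m+1), g i * Real.exp (x i.succ - x i.castSucc))
      = ∑ i : Fin (m+1), Real.exp (y i - x i.castSucc) * (g i * Real.exp (x i.succ - y i)) := by
    apply Finset.sum_congr rfl
    intro i _
    rw [mul_left_comm, ← Real.exp_add]
    congr 2
    ring
  have hgy : (∑ i : Fin m, g i.castSucc * Real.exp (y i.succ - y i.castSucc))
      = ∑ i : Fin m, (g i.castSucc * Real.exp (x i.castSucc.succ - y i.castSucc))
          * Real.exp (y i.succ - x i.succ.castSucc) := by
    apply Finset.sum_congr rfl
    intro i _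
    rw [mul_assoc, ← Real.exp_add]
    congr 2
    rw [Fin.succ_castSucc]
    ring
  simp only [pd2_x, pd2_y]
  rw [← Finset.mul_sum, ← Finset.mul_sum, hgx, hgy, sum_Bf_Af]
  exact final_algebra m (Qker m g x y) (fun i => Real.exp (y i - x i.castSucc))
    (fun i => g i * Real.exp (x i.succ - y i))
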